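/- Let G be a graph on n nodes, k with ⌊(n-1)/2⌋ ≤ k ≤ n-2. Then β(G) ≤ k if and only if there exists an injection L : {0,...,n-k-2} ↪ V(G) such that for all j with 0 ≤ j < n-k-1, the set A_j = {v ∈ V(G) \ im(L) : {L(i), v} ∉ E(G) for all i ≤ j} satisfies |A_j| ≥ n-k-j-1. -/

import Mathlib

/-- The set `A_j` of unplaced nodes not adjacent to any of `L 0, …, L j`. -/
def Aset {V : Type} {m : ℕ} (G : SimpleGraph V) (L : Fin m ↪ V) (j : Fin m) : Set V :=
  {v : V | v ∉ Set.range L ∧ ∀ i : Fin m, i ≤ j → ¬ G.Adj (L i) v}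

theorem stmt14 {V : Type} [Fintype V] {n k : ℕ} (hcard : Fintype.card V = n)
    (G : SimpleGraph V) (hk1 : (n - 1) / 2 ≤ k) (hk2 : k ≤ n - 2) :
    (∃ π : V ≃ Fin n, ∀ u v : V, G.Adj u v →
        |((π u : ℕ) : ℤ) - ((π v : ℕ) : ℤ)| ≤ (k : ℤ)) ↔
      ∃ L : Fin (n - k - 1) ↪ V,
        ∀ j : Fin (n - k - 1), n - k - 1 - (j : ℕ) ≤ (Aset G L j).ncard := by
  classical
  by_cases hn : n ≤ k + 1
  · constructor
    · intro _
      exact ⟨⟨fun i => absurd i.isLt (by omega), fun a b _ => absurd a.isLt (by omega)⟩,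
        fun j => absurd j.isLt (by omega)⟩
    · intro _
      refine ⟨Fintype.equivFinOfCardEq hcard, fun u v _ => ?_⟩
      have h1 := (Fintype.equivFinOfCardEq hcard u).isLt
      have h2 := (Fintype.equivFinOfCardEq hcard v).isLt
      rw [abs_sub_le_iff]
      omega
  · have h2k : n ≤ 2 * k + 2 := by omega
    constructor
    · rintro ⟨π, hπ⟩
      have hlt : ∀ i : Fin (n - k - 1), (i : ℕ) < n := fun i => by
        have := i.isLt; omega
      set L : Fin (n - k - 1) ↪ V :=
        ⟨fun i => π.symm ⟨i, hlt i⟩, fun a b hab =>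
          Fin.ext (by simpa using congrArg Fin.val (π.symm.injective hab))⟩ with hLdef
      refine ⟨L, fun j => ?_⟩
      have hval : ∀ i : Fin (n - k - 1), (π (L i) : ℕ) = (i : ℕ) := by
        intro i
        simp only [hLdef, Function.Embedding.coeFn_mk, Equiv.apply_symm_apply]
        exact congrArg Fin.val (π.apply_symm_apply ⟨i, hlt i⟩)
      have hjlt := j.isLt
      set F : Fin (n - k - 1 - (j : ℕ)) → V := fun i =>
        π.symm ⟨(j : ℕ) + k + 1 + (i : ℕ), by have := i.isLt; omega⟩ with hF
      have hFval : ∀ i, (π (F i) : ℕ) = (j : ℕ) + k + 1 + (i : ℕ) := by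
        intro i
        simp only [hF, Equiv.apply_symm_apply]
      have hmem : ∀ i, F i ∈ Aset G L j := by
        intro i
        refine ⟨?_, ?_⟩
        · rintro ⟨a, ha⟩
          have h1 : (π (L a) : ℕ) = (a : ℕ) := hval a
          rw [ha, hFval i] at h1
          have := a.isLt
          omega
        · intro i' hi' hadj
          have hij : (i' : ℕ) ≤ (j : ℕ) := hi'
          have hb := hπ _ _ hadj
          rw [hval i', hFval i, abs_sub_le_iff] at hb
          omega
      have hinj : Function.Injective
          (fun i : Fin (n - k - 1 - (j : ℕ)) => (⟨F i, hmem i⟩ : Aset G L j)) := by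
        intro a b hab
        have h1 : F a = F b := congrArg Subtype.val hab
        have h2 : (π (F a) : ℕ) = (π (F b) : ℕ) := by rw [h1]
        rw [hFval a, hFval b] at h2
        exact Fin.ext (by omega)
      calc n - k - 1 - (j : ℕ) = Nat.card (Fin (n - k - 1 - (j : ℕ))) := by
            simp
        _ ≤ Nat.card (Aset G L j) := Nat.card_le_card_of_injective _ hinj
        _ = (Aset G L j).ncard := Nat.card_coe_set_eq _
    · rintro ⟨L, hL⟩
      set d := k + 1 - (n - k - 1) with hd
      have hsubd : ∀ q : Fin (k + 1), ¬ ((q : ℕ) < d) → (q : ℕ) - d < n - k - 1 := by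
        intro q h
        have := q.isLt
        omega
      set S : Fin (k + 1) → Finset V := fun q =>
        if h : (q : ℕ) < d then ((Set.range L)ᶜ).toFinset
        else (Aset G L ⟨(q : ℕ) - d, hsubd q h⟩).toFinset with hS
      have hScompl : ∀ q : Fin (k + 1), ∀ v ∈ S q, v ∉ Set.range L := by
        intro q v hv
        simp only [hS] at hv
        by_cases h : (q : ℕ) < d
        · rw [dif_pos h, Set.mem_toFinset] at hv
          exact hv
        · rw [dif_neg h, Set.mem_toFinset] at hv
          exact hv.1
      have hall : ∀ s : Finset (Fin (k + 1)), s.card ≤ (s.biUnion S).card := by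
        intro s
        rcases s.eq_empty_or_nonempty with rfl | hne
        · simp
        set q0 := s.min' hne with hq0
        have hmemq0 := s.min'_mem hne
        have hcard1 : s.card ≤ k + 1 - (q0 : ℕ) := by
          have hsub : s ⊆ Finset.Ici q0 := fun x hx => Finset.mem_Ici.mpr (s.min'_le x hx)
          have := Finset.card_le_card hsub
          rwa [Fin.card_Ici] at this
        have hcard2 : k + 1 - (q0 : ℕ) ≤ (S q0).card := by
          by_cases h : (q0 : ℕ) < d
          · have hSq : S q0 = ((Set.range L)ᶜ).toFinset := by
              simp only [hS]; rw [dif_pos h]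
            rw [hSq, Set.toFinset_compl, Finset.card_compl]
            have hr : (Set.range ⇑L).toFinset.card = n - k - 1 := by
              rw [Set.toFinset_card, Set.card_range_of_injective L.injective, Fintype.card_fin]
            rw [hr, hcard]
            omega
          · have hSq : S q0 = (Aset G L ⟨(q0 : ℕ) - d, hsubd q0 h⟩).toFinset := by
              simp only [hS]; rw [dif_neg h]
            rw [hSq]
            have hh := hL ⟨(q0 : ℕ) - d, hsubd q0 h⟩
            rw [Set.ncard_eq_toFinset_card'] at hh
            have := q0.isLt
            simp only at hh
            omega
        calc s.card ≤ (S q0).card := le_trans hcard1 hcard2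
          _ ≤ (s.biUnion S).card := Finset.card_le_card (Finset.subset_biUnion_of_mem S hmemq0)
      obtain ⟨f, hfinj, hfS⟩ := (Finset.all_card_le_biUnion_card_iff_exists_injective S).mp hall
      have hfL : ∀ q, f q ∉ Set.range L := fun q => hScompl q (f q) (hfS q)
      set g : Fin n → V := fun p =>
        if h : (p : ℕ) < n - k - 1 then L ⟨p, h⟩
        else f ⟨(p : ℕ) - (n - k - 1), by have := p.isLt; omega⟩ with hg
      have hginj : Function.Injective g := by
        intro p p' hpp
        simp only [hg] at hpp
        by_cases h1 : (p : ℕ) < n - k - 1 <;> by_cases h2 : (p' : ℕ) < n - k - 1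
        · rw [dif_pos h1, dif_pos h2] at hpp
          have := L.injective hpp
          exact Fin.ext (by simpa using congrArg Fin.val this)
        · rw [dif_pos h1, dif_neg h2] at hpp
          exact absurd ⟨_, hpp⟩ (hfL _)
        · rw [dif_neg h1, dif_pos h2] at hpp
          exact absurd ⟨_, hpp.symm⟩ (hfL _)
        · rw [dif_neg h1, dif_neg h2] at hpp
          have hv := congrArg Fin.val (hfinj hpp)
          simp only at hv
          have hpn := p.isLt
          have hp'n := p'.isLt
          exact Fin.ext (by omega)
      have hgbij : Function.Bijective g :=
        (Fintype.bijective_iff_injective_and_card g).mpr ⟨hginj, by simp [hcard]⟩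
      set e := Equiv.ofBijective g hgbij with he
      have hge : ∀ u : V, g (e.symm u) = u := fun u => e.apply_symm_apply u
      refine ⟨e.symm, ?_⟩
      have key : ∀ u v : V, G.Adj u v → ((e.symm u : ℕ)) ≤ (e.symm v : ℕ) + k := by
        intro u v huv
        by_contra hgt
        push_neg at hgt
        set p := e.symm u with hp
        set p' := e.symm v with hp'
        have hpn := p.isLt
        have hp'n := p'.isLt
        have hpm : ¬ ((p : ℕ) < n - k - 1) := by omega
        have hp'm : (p' : ℕ) < n - k - 1 := by
          by_contra hc
          push_neg at hc
          omega
        set q : Fin (k + 1) := ⟨(p : ℕ) - (n - k - 1), by omega⟩ with hqdef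
        have hq1 : (q : ℕ) = (p : ℕ) - (n - k - 1) := rfl
        have hqd : ¬ ((q : ℕ) < d) := by omega
        have hu : u = f q := by
          have h := (hge u).symm
          simp only [hg] at h
          rw [dif_neg hpm] at h
          exact h
        have hv : v = L ⟨(p' : ℕ), hp'm⟩ := by
          have h := (hge v).symm
          simp only [hg] at h
          rw [dif_pos hp'm] at h
          exact h
        have hfq := hfS q
        simp only [hS] at hfq
        rw [dif_neg hqd, Set.mem_toFinset] at hfq
        obtain ⟨-, hnadj⟩ := hfq
        have hip : ((⟨(p' : ℕ), hp'm⟩ : Fin (n - k - 1)) ≤ ⟨(q : ℕ) - d, hsubd q hqd⟩) := by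
          show (p' : ℕ) ≤ (q : ℕ) - d
          omega
        exact hnadj ⟨(p' : ℕ), hp'm⟩ hip (by rw [← hu, ← hv]; exact huv.symm)
      intro u v huv
      have h1 := key u v huv
      have h2 := key v u huv.symm
      rw [abs_sub_le_iff]
      omega
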